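/- Let g be a circular density with second trigonometric moment ∫_{−π}^{π} e^{2is} g(s) ds = ρ₂ e^{iμ₂} (ρ₂ ≥ 0, μ₂ ∈ ℝ), let p ≥ 1, let a₁,…,a_p ≥ 0 with a₁ + ⋯ + a_p = 1, and let q₁,…,q_p ∈ {−1,1}. Writing U(θ) = (cos θ, sin θ)ᵀ, for all θ₁,…,θ_p ∈ ℝ the second conditional moment of the MTD transition density satisfies ∫_{−π}^{π} U(θ)U(θ)ᵀ · (Σ_{i=1}^{p} a_i g(θ − q_i θ_i)) dθ = ½(I₂ − D(ρ₂,μ₂)) + D(ρ₂,μ₂) Σ_{i=1}^{p} a_i Q(q_i) U(θ_i) U(θ_i)ᵀ Q(q_i). -/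

import Mathlib

open Real MeasureTheory Matrix

/-- `D(ρ,μ) = ρ·[[cos μ, −sin μ],[sin μ, cos μ]]`. -/
noncomputable def Dmat (ρ μ : ℝ) : Matrix (Fin 2) (Fin 2) ℝ :=
  ρ • !![Real.cos μ, -Real.sin μ; Real.sin μ, Real.cos μ]

/-- `Q(q) = diag(1, q)`. -/
def Qmat (q : ℝ) : Matrix (Fin 2) (Fin 2) ℝ := !![1, 0; 0, q]

/-- `U(θ)U(θ)ᵀ` where `U(θ) = (cos θ, sin θ)ᵀ`. -/
noncomputable def UU (θ : ℝ) : Matrix (Fin 2) (Fin 2) ℝ :=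
  Matrix.vecMulVec ![Real.cos θ, Real.sin θ] ![Real.cos θ, Real.sin θ]

theorem stmt3 (g : ℝ → ℝ) (hmeas : Measurable g) (hnonneg : ∀ x, 0 ≤ g x)
    (hper : ∀ x, g (x + 2 * π) = g x) (hint : (∫ s in (-π)..π, g s) = 1)
    (ρ₂ μ₂ : ℝ) (hρ₂ : 0 ≤ ρ₂)
    (hmom : (∫ s in (-π)..π, (g s : ℂ) * Complex.exp (2 * (s : ℂ) * Complex.I)) =
      (ρ₂ : ℂ) * Complex.exp ((μ₂ : ℂ) * Complex.I))
    (p : ℕ) (hp : 1 ≤ p) (a : Fin p → ℝ) (ha : ∀ i, 0 ≤ a i) (hsum : ∑ i, a i = 1)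
    (q : Fin p → ℝ) (hq : ∀ i, q i = 1 ∨ q i = -1) (θv : Fin p → ℝ) :
    (Matrix.of fun i j => ∫ θ in (-π)..π,
        UU θ i j * (∑ k, a k * g (θ - q k * θv k))) =
      (1 / 2 : ℝ) • ((1 : Matrix (Fin 2) (Fin 2) ℝ) - Dmat ρ₂ μ₂) +
        Dmat ρ₂ μ₂ * ∑ k, a k • (Qmat (q k) * UU (θv k) * Qmat (q k)) := by
  have hπ : (0:ℝ) < π := Real.pi_pos
  have hperiodic : Function.Periodic g (2*π) := hper
  -- integrability of g on [-π, π]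
  have hInt1 : IntervalIntegrable g volume (-π) π := by
    rw [intervalIntegrable_iff_integrableOn_Ioc_of_le (by linarith)]
    by_contra h
    rw [intervalIntegral.integral_of_le (by linarith), integral_undef h] at hint
    norm_num at hint
  have claim : ∀ n : ℤ, IntervalIntegrable g volume (-π + 2*π*n) (π + 2*π*n) := by
    intro n
    have h := hInt1.comp_sub_right (2*π*n)
    have hg : (fun x => g (x - 2*π*n)) = g := by
      funext x
      rw [show (2*π*(n:ℝ)) = (n:ℝ)*(2*π) by ring]
      exact hperiodic.sub_int_mul_eq n
    rwa [hg] at h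
  have hg2 : ∀ t : ℝ, IntervalIntegrable g volume t (t + 2*π) := by
    intro t
    set n : ℤ := ⌊(t + π)/(2*π)⌋ with hn
    have h2π : (0:ℝ) < 2*π := by linarith
    have hfl : (n:ℝ) ≤ (t + π)/(2*π) := Int.floor_le _
    have hfl2 : (t + π)/(2*π) < (n:ℝ) + 1 := Int.lt_floor_add_one _
    have hb1 : (n:ℝ)*(2*π) ≤ t + π := (le_div_iff₀ h2π).mp hfl
    have hb2 : t + π < ((n:ℝ)+1)*(2*π) := (div_lt_iff₀ h2π).mp hfl2
    have c2 := claim (n+1)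
    push_cast at c2
    rw [show -π + 2*π*((n:ℝ)+1) = π + 2*π*n by ring] at c2
    have key := (claim n).trans c2
    apply key.mono_set
    rw [Set.uIcc_of_le (by linarith), Set.uIcc_of_le (by nlinarith)]
    apply Set.Icc_subset_Icc <;> nlinarith
  have hshift : ∀ c : ℝ, IntervalIntegrable (fun x => g (x - c)) volume (-π) π := by
    intro c
    have h := (hg2 (-π - c)).comp_sub_right c
    rwa [show -π - c + c = -π by ring, show -π - c + 2*π + c = π by ring] at h
  have hIc2 : IntervalIntegrable (fun s => Real.cos (2*s) * g s) volume (-π) π :=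
    hInt1.continuousOn_mul (Continuous.continuousOn (by fun_prop))
  have hIs2 : IntervalIntegrable (fun s => Real.sin (2*s) * g s) volume (-π) π :=
    hInt1.continuousOn_mul (Continuous.continuousOn (by fun_prop))
  -- the second trigonometric moments of g
  have hCS : (∫ s in (-π)..π, Real.cos (2*s) * g s) = ρ₂ * Real.cos μ₂ ∧
      (∫ s in (-π)..π, Real.sin (2*s) * g s) = ρ₂ * Real.sin μ₂ := by
    have hre : Set.EqOn (fun s : ℝ => (g s : ℂ) * Complex.exp (2 * (s:ℂ) * Complex.I))
        (fun s : ℝ => ((Real.cos (2*s) * g s : ℝ) : ℂ) + ((Real.sin (2*s) * g s : ℝ) : ℂ) * Complex.I)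
        (Set.uIcc (-π) π) := by
      intro s _
      simp only
      rw [show (2 * (s:ℂ) * Complex.I) = ((2*s : ℝ) : ℂ) * Complex.I by push_cast; ring,
        Complex.exp_mul_I, ← Complex.ofReal_cos, ← Complex.ofReal_sin]
      push_cast
      ring
    have hIcC : IntervalIntegrable (fun s => ((Real.cos (2*s) * g s : ℝ) : ℂ)) volume (-π) π :=
      ⟨hIc2.1.ofReal, hIc2.2.ofReal⟩
    have hIsC : IntervalIntegrable (fun s => ((Real.sin (2*s) * g s : ℝ) : ℂ) * Complex.I) volume (-π) π :=
      ⟨hIs2.1.ofReal.mul_const _, hIs2.2.ofReal.mul_const _⟩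
    rw [intervalIntegral.integral_congr hre,
      intervalIntegral.integral_add hIcC hIsC, intervalIntegral.integral_mul_const,
      intervalIntegral.integral_ofReal, intervalIntegral.integral_ofReal,
      show ((μ₂:ℂ) * Complex.I) = ((μ₂:ℝ):ℂ) * Complex.I from rfl, Complex.exp_mul_I,
      ← Complex.ofReal_cos, ← Complex.ofReal_sin] at hmom
    constructor
    · have := congrArg Complex.re hmom; simpa [Complex.cos_ofReal_re] using this
    · have := congrArg Complex.im hmom; simpa [Complex.sin_ofReal_re] using this
  -- translation identities
  have hI0 : ∀ c : ℝ, (∫ θ in (-π)..π, g (θ - c)) = 1 := by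
    intro c
    rw [intervalIntegral.integral_comp_sub_right g c,
      show π - c = (-π - c) + 2*π by ring,
      hperiodic.intervalIntegral_add_eq (-π - c) (-π),
      show -π + 2*π = π by ring]
    exact hint
  have hIc : ∀ c : ℝ, (∫ θ in (-π)..π, Real.cos (2*θ) * g (θ - c)) =
      Real.cos (2*c) * (ρ₂ * Real.cos μ₂) - Real.sin (2*c) * (ρ₂ * Real.sin μ₂) := by
    intro c
    have e1 : (fun θ => Real.cos (2*θ) * g (θ - c)) =
        fun θ => (fun x => Real.cos (2*(x + c)) * g x) (θ - c) := by
      funext θ; simp [sub_add_cancel]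
    rw [show (∫ θ in (-π)..π, Real.cos (2*θ) * g (θ - c)) =
        ∫ θ in (-π)..π, (fun x => Real.cos (2*(x + c)) * g x) (θ - c) from by rw [← e1]]
    rw [intervalIntegral.integral_comp_sub_right (fun x => Real.cos (2*(x + c)) * g x) c]
    have hFper : Function.Periodic (fun x => Real.cos (2*(x + c)) * g x) (2*π) := by
      intro x
      simp only
      rw [hper, show 2*(x + 2*π + c) = 2*(x+c) + 2*π + 2*π by ring,
        Real.cos_add_two_pi, Real.cos_add_two_pi]
    rw [show π - c = (-π - c) + 2*π by ring, hFper.intervalIntegral_add_eq (-π - c) (-π),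
      show -π + 2*π = π by ring]
    have e2 : Set.EqOn (fun x => Real.cos (2*(x + c)) * g x)
        (fun x => Real.cos (2*c) * (Real.cos (2*x) * g x) - Real.sin (2*c) * (Real.sin (2*x) * g x))
        (Set.uIcc (-π) π) := by
      intro x _
      simp only
      rw [show 2*(x+c) = 2*x + 2*c by ring, Real.cos_add]
      ring
    rw [intervalIntegral.integral_congr e2,
      intervalIntegral.integral_sub (hIc2.const_mul _) (hIs2.const_mul _),
      intervalIntegral.integral_const_mul, intervalIntegral.integral_const_mul,
      hCS.1, hCS.2]
  have hIs : ∀ c : ℝ, (∫ θ in (-π)..π, Real.sin (2*θ) * g (θ - c)) =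
      Real.sin (2*c) * (ρ₂ * Real.cos μ₂) + Real.cos (2*c) * (ρ₂ * Real.sin μ₂) := by
    intro c
    have e1 : (fun θ => Real.sin (2*θ) * g (θ - c)) =
        fun θ => (fun x => Real.sin (2*(x + c)) * g x) (θ - c) := by
      funext θ; simp [sub_add_cancel]
    rw [show (∫ θ in (-π)..π, Real.sin (2*θ) * g (θ - c)) =
        ∫ θ in (-π)..π, (fun x => Real.sin (2*(x + c)) * g x) (θ - c) from by rw [← e1]]
    rw [intervalIntegral.integral_comp_sub_right (fun x => Real.sin (2*(x + c)) * g x) c]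
    have hFper : Function.Periodic (fun x => Real.sin (2*(x + c)) * g x) (2*π) := by
      intro x
      simp only
      rw [hper, show 2*(x + 2*π + c) = 2*(x+c) + 2*π + 2*π by ring,
        Real.sin_add_two_pi, Real.sin_add_two_pi]
    rw [show π - c = (-π - c) + 2*π by ring, hFper.intervalIntegral_add_eq (-π - c) (-π),
      show -π + 2*π = π by ring]
    have e2 : Set.EqOn (fun x => Real.sin (2*(x + c)) * g x)
        (fun x => Real.sin (2*c) * (Real.cos (2*x) * g x) + Real.cos (2*c) * (Real.sin (2*x) * g x))
        (Set.uIcc (-π) π) := by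
      intro x _
      simp only
      rw [show 2*(x+c) = 2*x + 2*c by ring, Real.sin_add]
      ring
    rw [intervalIntegral.integral_congr e2,
      intervalIntegral.integral_add (hIc2.const_mul _) (hIs2.const_mul _),
      intervalIntegral.integral_const_mul, intervalIntegral.integral_const_mul,
      hCS.1, hCS.2]
  -- entrywise integrals
  have hIcc : ∀ c : ℝ, (∫ θ in (-π)..π, Real.cos θ * Real.cos θ * g (θ - c)) =
      1/2 + (Real.cos (2*c) * (ρ₂ * Real.cos μ₂) - Real.sin (2*c) * (ρ₂ * Real.sin μ₂))/2 := by
    intro c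
    have e : Set.EqOn (fun θ => Real.cos θ * Real.cos θ * g (θ - c))
        (fun θ => 1/2 * g (θ - c) + 1/2 * (Real.cos (2*θ) * g (θ - c))) (Set.uIcc (-π) π) := by
      intro θ _
      simp only
      linear_combination (-(g (θ - c))/2) * Real.cos_two_mul θ
    rw [intervalIntegral.integral_congr e,
      intervalIntegral.integral_add ((hshift c).const_mul _)
        (((hshift c).continuousOn_mul (Continuous.continuousOn (by fun_prop))).const_mul _),
      intervalIntegral.integral_const_mul, intervalIntegral.integral_const_mul, hI0 c, hIc c]
    ring
  have hIss : ∀ c : ℝ, (∫ θ in (-π)..π, Real.sin θ * Real.sin θ * g (θ - c)) =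
      1/2 - (Real.cos (2*c) * (ρ₂ * Real.cos μ₂) - Real.sin (2*c) * (ρ₂ * Real.sin μ₂))/2 := by
    intro c
    have e : Set.EqOn (fun θ => Real.sin θ * Real.sin θ * g (θ - c))
        (fun θ => 1/2 * g (θ - c) - 1/2 * (Real.cos (2*θ) * g (θ - c))) (Set.uIcc (-π) π) := by
      intro θ _
      simp only
      linear_combination ((g (θ - c))/2) * Real.cos_two_mul' θ + ((g (θ - c))/2) * Real.sin_sq_add_cos_sq θ
    rw [intervalIntegral.integral_congr e,
      intervalIntegral.integral_sub ((hshift c).const_mul _)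
        (((hshift c).continuousOn_mul (Continuous.continuousOn (by fun_prop))).const_mul _),
      intervalIntegral.integral_const_mul, intervalIntegral.integral_const_mul, hI0 c, hIc c]
    ring
  have hIcs : ∀ c : ℝ, (∫ θ in (-π)..π, Real.cos θ * Real.sin θ * g (θ - c)) =
      (Real.sin (2*c) * (ρ₂ * Real.cos μ₂) + Real.cos (2*c) * (ρ₂ * Real.sin μ₂))/2 := by
    intro c
    have e : Set.EqOn (fun θ => Real.cos θ * Real.sin θ * g (θ - c))
        (fun θ => 1/2 * (Real.sin (2*θ) * g (θ - c))) (Set.uIcc (-π) π) := by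
      intro θ _
      simp only
      linear_combination (-(g (θ - c))/2) * Real.sin_two_mul θ
    rw [intervalIntegral.integral_congr e, intervalIntegral.integral_const_mul, hIs c]
    ring
  have hIsc : ∀ c : ℝ, (∫ θ in (-π)..π, Real.sin θ * Real.cos θ * g (θ - c)) =
      (Real.sin (2*c) * (ρ₂ * Real.cos μ₂) + Real.cos (2*c) * (ρ₂ * Real.sin μ₂))/2 := by
    intro c
    rw [intervalIntegral.integral_congr (g := fun θ => Real.cos θ * Real.sin θ * g (θ - c))
      (fun θ _ => by simp only; ring)]
    exact hIcs c
  have hmain : ∀ k : Fin p, (Matrix.of fun i j => ∫ θ in (-π)..π, UU θ i j * g (θ - q k * θv k)) =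
      (1/2 : ℝ) • ((1 : Matrix (Fin 2) (Fin 2) ℝ) - Dmat ρ₂ μ₂) +
        Dmat ρ₂ μ₂ * (Qmat (q k) * UU (θv k) * Qmat (q k)) := by
    intro k
    have hfin : ∀ x : ℝ, Real.cos (2*x) = 2 * Real.cos x * Real.cos x - 1 := by
      intro x; rw [Real.cos_two_mul]; ring
    have hfin2 : ∀ x : ℝ, Real.sin (2*x) = 2 * Real.sin x * Real.cos x := Real.sin_two_mul
    have hsin2 : Real.sin (θv k) * Real.sin (θv k) = 1 - Real.cos (θv k) * Real.cos (θv k) := by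
      nlinarith [Real.sin_sq_add_cos_sq (θv k)]
    ext i j
    fin_cases i <;> fin_cases j <;>
      simp [UU, Dmat, Qmat, Matrix.mul_apply, Matrix.vecMulVec_apply, Fin.sum_univ_two,
        Matrix.one_apply, Matrix.vecHead, Matrix.vecTail]
    · rw [hIcc (q k * θv k)]
      rcases hq k with h | h <;> rw [h] <;>
        [rw [show (2:ℝ) * (1 * θv k) = 2 * θv k by ring];
         rw [show (2:ℝ) * (-1 * θv k) = -(2 * θv k) by ring, Real.cos_neg, Real.sin_neg]] <;>
        rw [hfin, hfin2] <;> ring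
    · rw [hIcs (q k * θv k)]
      rcases hq k with h | h <;> rw [h] <;>
        [rw [show (2:ℝ) * (1 * θv k) = 2 * θv k by ring];
         rw [show (2:ℝ) * (-1 * θv k) = -(2 * θv k) by ring, Real.cos_neg, Real.sin_neg]] <;>
        rw [hfin, hfin2, hsin2] <;> ring
    · rw [hIsc (q k * θv k)]
      rcases hq k with h | h <;> rw [h] <;>
        [rw [show (2:ℝ) * (1 * θv k) = 2 * θv k by ring];
         rw [show (2:ℝ) * (-1 * θv k) = -(2 * θv k) by ring, Real.cos_neg, Real.sin_neg]] <;>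
        rw [hfin, hfin2] <;> ring
    · rw [hIss (q k * θv k)]
      rcases hq k with h | h <;> rw [h] <;>
        [rw [show (2:ℝ) * (1 * θv k) = 2 * θv k by ring];
         rw [show (2:ℝ) * (-1 * θv k) = -(2 * θv k) by ring, Real.cos_neg, Real.sin_neg]] <;>
        rw [hfin, hfin2, hsin2] <;> ring
  have hUcont : ∀ i j : Fin 2, Continuous fun θ => UU θ i j := by
    intro i j
    fin_cases i <;> fin_cases j <;>
      simp [UU, Matrix.vecMulVec_apply, Matrix.vecHead, Matrix.vecTail] <;> fun_prop
  calc (Matrix.of fun i j => ∫ θ in (-π)..π, UU θ i j * (∑ k, a k * g (θ - q k * θv k)))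
      = ∑ k, a k • (Matrix.of fun i j => ∫ θ in (-π)..π, UU θ i j * g (θ - q k * θv k)) := by
        ext i j
        simp only [Matrix.of_apply, Matrix.sum_apply, Matrix.smul_apply, smul_eq_mul]
        rw [show (fun θ => UU θ i j * (∑ k, a k * g (θ - q k * θv k))) =
            fun θ => ∑ k, a k * (UU θ i j * g (θ - q k * θv k)) from
          funext fun θ => by rw [Finset.mul_sum]; exact Finset.sum_congr rfl fun k _ => by ring]
        rw [intervalIntegral.integral_finset_sum (fun k _ =>
          (((hshift (q k * θv k)).continuousOn_mul (hUcont i j).continuousOn).const_mul (a k)))]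
        exact Finset.sum_congr rfl fun k _ => intervalIntegral.integral_const_mul _ _
    _ = ∑ k, a k • ((1/2 : ℝ) • ((1 : Matrix (Fin 2) (Fin 2) ℝ) - Dmat ρ₂ μ₂) +
          Dmat ρ₂ μ₂ * (Qmat (q k) * UU (θv k) * Qmat (q k))) :=
        Finset.sum_congr rfl fun k _ => by rw [hmain k]
    _ = (1 / 2 : ℝ) • ((1 : Matrix (Fin 2) (Fin 2) ℝ) - Dmat ρ₂ μ₂) +
        Dmat ρ₂ μ₂ * ∑ k, a k • (Qmat (q k) * UU (θv k) * Qmat (q k)) := by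
        simp only [smul_add]
        rw [Finset.sum_add_distrib]
        congr 1
        · simp only [smul_smul]
          rw [← Finset.sum_smul, ← Finset.sum_mul, hsum, one_mul]
        · rw [Finset.mul_sum]
          exact Finset.sum_congr rfl fun k _ => (Matrix.mul_smul _ _ _).symm
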